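/- arXiv:2211.05815 — 3 statements merged into one kernel-verified Lean document; each statement's English description precedes it below -/
import Mathlib

section
/- The model vector (-1, 2, 1, -5, 4) solves every sequence of the form x(n) = q(n) + f(n), where q is a polynomial of degree at most 2 and f satisfies the Fibonacci recurrence f(n+2) = f(n+1) + f(n) for all n. -/
/-- The model vector (-1, 2, 1, -5, 4) solves every sequence that is a sum of a
polynomial of degree at most 2 and a Fibonacci-rule sequence. -/
theorem stmt_3 (a b c : ℝ) (f x : ℤ → ℝ)
    (hf : ∀ n : ℤ, f (n + 2) = f (n + 1) + f n)
    (hx : ∀ n : ℤ, x n = (a * (n : ℝ) ^ 2 + b * (n : ℝ) + c) + f n) :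
    ∀ n : ℤ,
      (-1) * x n + 2 * x (n + 1) + 1 * x (n + 2) + (-5) * x (n + 3)
        + 4 * x (n + 4) = x (n + 5) := by
  intro n
  have h2 := hf n
  have h3 := hf (n + 1)
  have h4 := hf (n + 2)
  have h5 := hf (n + 3)
  simp only [hx]
  push_cast at *
  ring_nf at *
  nlinarith [h2, h3, h4, h5]
end

section
/- Model Composition Theorem: Let a, b ∈ ℝⁿ and suppose a solves (in the length-n sense) the sequence y : ℤ → ℝ, i.e. for all m, Σᵢ aᵢ·y(m+i-1) = y(m+n). Define c ∈ ℝ^{2n} by c_k = a_{k-n} + b_{k-n} - Σ_{j+ℓ=k+1, 1≤j,ℓ≤n} a_j·b_ℓ, where a_{k-n} and b_{k-n} are taken to be 0 when k ≤ n, and the convolution sum is empty when k = 2n. Then c solves y in the length-2n sense: for all m, Σ_{k=1}^{2n} c_k·y(m+k-1) = y(m+2n). -/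
/-- Model Composition Theorem: if `a` solves `y` in the length-`n` sense, then
the composition `c` of `a` and `b` solves `y` in the length-`2n` sense. -/
theorem stmt_5 (n : ℕ) (a b : Fin n → ℝ) (c : Fin (2 * n) → ℝ) (y : ℤ → ℝ)
    (ha : ∀ m : ℤ, (∑ i : Fin n, a i * y (m + (i : ℕ))) = y (m + (n : ℕ)))
    (hc : ∀ k : Fin (2 * n),
      c k =
        (if h : n ≤ (k : ℕ) then a ⟨(k : ℕ) - n, by have := k.isLt; omega⟩ else 0)
        + (if h : n ≤ (k : ℕ) then b ⟨(k : ℕ) - n, by have := k.isLt; omega⟩ else 0)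
        - ∑ j : Fin n, ∑ l : Fin n,
            if (j : ℕ) + (l : ℕ) = (k : ℕ) then a j * b l else 0) :
    ∀ m : ℤ, (∑ k : Fin (2 * n), c k * y (m + (k : ℕ))) = y (m + (2 * n : ℕ)) := by
  intro m
  rcases Nat.eq_zero_or_pos n with hn | hn
  · subst hn
    have h0 := ha m
    simp only [Nat.mul_zero, Finset.univ_eq_empty, Finset.sum_empty, Nat.cast_zero, add_zero]
      at h0 ⊢
    exact h0
  -- block lemma: sums of the shifted dite terms
  have block : ∀ f : Fin n → ℝ,
      (∑ k : Fin (2*n),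
        (if h : n ≤ (k:ℕ) then f ⟨(k:ℕ) - n, by have := k.isLt; omega⟩ else 0) * y (m + (k:ℕ)))
      = ∑ i : Fin n, f i * y (m + (n:ℕ) + (i:ℕ)) := by
    intro f
    set ι : Fin n → Fin (2*n) := fun i => ⟨n + i.1, by have := i.isLt; omega⟩ with hι
    set F : Fin (2*n) → ℝ := fun k =>
      (if h : n ≤ (k:ℕ) then f ⟨(k:ℕ) - n, by have := k.isLt; omega⟩ else 0) * y (m + (k:ℕ))
      with hF
    have hinj : ∀ i ∈ Finset.univ, ∀ j ∈ Finset.univ, ι i = ι j → i = j := by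
      intro i _ j _ hij
      simp only [hι, Fin.mk.injEq, Fin.ext_iff] at hij ⊢
      omega
    have h1 : (∑ k : Fin (2*n), F k) = ∑ k ∈ Finset.univ.image ι, F k := by
      refine (Finset.sum_subset (Finset.subset_univ _) ?_).symm
      intro k _ hk
      have hkn : ¬ n ≤ (k:ℕ) := by
        intro hnk
        refine hk (Finset.mem_image.mpr ⟨⟨(k:ℕ) - n, by have := k.isLt; omega⟩,
          Finset.mem_univ _, ?_⟩)
        simp only [hι, Fin.ext_iff]
        omega
      simp [hF, hkn]
    rw [h1, Finset.sum_image hinj]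
    refine Finset.sum_congr rfl fun i _ => ?_
    have hle : n ≤ ((ι i : Fin (2*n)) : ℕ) := by simp [hι]
    rw [hF]
    simp only [hι, dif_pos hle]
    congr 1
    · rw [dif_pos (Nat.le_add_right n i)]
      congr 1
      simp only [Fin.ext_iff]
      omega
    · congr 1
      push_cast
      ring
  -- key: collapse inner triple sum
  have key : ∀ (j l : Fin n),
      (∑ k : Fin (2*n), (if (j:ℕ)+(l:ℕ) = (k:ℕ) then a j * b l else 0) * y (m + (k:ℕ)))
        = a j * b l * y (m + (j:ℕ) + (l:ℕ)) := by
    intro j l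
    have hlt : (j:ℕ)+(l:ℕ) < 2*n := by have := j.isLt; have := l.isLt; omega
    rw [Finset.sum_eq_single (⟨(j:ℕ)+(l:ℕ), hlt⟩ : Fin (2*n))]
    · simp only [if_pos rfl]
      congr 1
      push_cast
      ring
    · intro k _ hk
      rw [if_neg, zero_mul]
      intro h
      exact hk (Fin.ext h.symm)
    · intro h
      exact absurd (Finset.mem_univ _) h
  -- expand
  simp only [hc, sub_mul, add_mul, Finset.sum_sub_distrib, Finset.sum_add_distrib,
    Finset.sum_mul]
  rw [block a, block b]
  have htr : (∑ k : Fin (2*n), ∑ j : Fin n, ∑ l : Fin n,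
      (if (j:ℕ)+(l:ℕ) = (k:ℕ) then a j * b l else 0) * y (m + (k:ℕ)))
      = ∑ i : Fin n, b i * y (m + (n:ℕ) + (i:ℕ)) := by
    rw [Finset.sum_comm]
    calc (∑ j : Fin n, ∑ k : Fin (2*n), ∑ l : Fin n,
            (if (j:ℕ)+(l:ℕ) = (k:ℕ) then a j * b l else 0) * y (m + (k:ℕ)))
        = ∑ j : Fin n, ∑ l : Fin n, ∑ k : Fin (2*n),
            (if (j:ℕ)+(l:ℕ) = (k:ℕ) then a j * b l else 0) * y (m + (k:ℕ)) := by
          exact Finset.sum_congr rfl fun j _ => Finset.sum_comm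
      _ = ∑ j : Fin n, ∑ l : Fin n, a j * b l * y (m + (j:ℕ) + (l:ℕ)) := by
          exact Finset.sum_congr rfl fun j _ => Finset.sum_congr rfl fun l _ => key j l
      _ = ∑ l : Fin n, ∑ j : Fin n, a j * b l * y (m + (l:ℕ) + (j:ℕ)) := by
          rw [Finset.sum_comm]
          refine Finset.sum_congr rfl fun l _ => Finset.sum_congr rfl fun j _ => ?_
          congr 1
          ring
      _ = ∑ l : Fin n, b l * y (m + (l:ℕ) + (n:ℕ)) := by
          refine Finset.sum_congr rfl fun l _ => ?_
          have := ha (m + (l:ℕ))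
          calc (∑ j : Fin n, a j * b l * y (m + (l:ℕ) + (j:ℕ)))
              = b l * ∑ j : Fin n, a j * y ((m + (l:ℕ)) + (j:ℕ)) := by
                rw [Finset.mul_sum]
                exact Finset.sum_congr rfl fun j _ => by ring
            _ = b l * y (m + (l:ℕ) + (n:ℕ)) := by rw [this]
      _ = ∑ i : Fin n, b i * y (m + (n:ℕ) + (i:ℕ)) := by
          refine Finset.sum_congr rfl fun i _ => ?_
          congr 1
          ring
  rw [htr]
  have hfin : (∑ i : Fin n, a i * y (m + (n:ℕ) + (i:ℕ))) = y (m + (2*n : ℕ)) := by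
    have := ha (m + (n:ℕ))
    rw [this]
    congr 1
    push_cast
    ring
  rw [hfin]
  ring
end

section
/- Subsumption: Let a ∈ ℝⁿ and b ∈ ℝᵐ, and let c = a ⊗ b ∈ ℝ^{n+m} be their composition (defined by c_k = a_{k-m} + b_{k-n} - Σ_{j+ℓ=k+1} a_j b_ℓ with appropriate zero-padding conventions). If a solves a sequence y : ℤ → ℝ, then c solves y. -/
/-- Shifted-sum helper: summing a shifted, truncated function over
`range (p + q)` equals the sum over `range p` of the shifted function. -/
lemma shift_sum_aux (p q : ℕ) (a' f : ℕ → ℝ) :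
    (∑ k ∈ Finset.range (p + q), if q ≤ k then a' (k - q) * f k else 0)
      = ∑ i ∈ Finset.range p, a' i * f (q + i) := by
  rw [Finset.range_eq_Ico,
    ← Finset.sum_Ico_consecutive _ (Nat.zero_le q) (by omega : q ≤ p + q)]
  have h0 : (∑ k ∈ Finset.Ico 0 q, if q ≤ k then a' (k - q) * f k else 0) = 0 := by
    apply Finset.sum_eq_zero
    intro k hk
    rw [Finset.mem_Ico] at hk
    rw [if_neg (by omega)]
  rw [h0, zero_add, Finset.sum_Ico_eq_sum_range]
  have hpq : p + q - q = p := by omega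
  rw [hpq]
  apply Finset.sum_congr rfl
  intro i _
  rw [if_pos (by omega)]
  congr 1
  · congr 1; omega

/-- Subsumption: if `a` solves `y`, then the composition `c = a ⊗ b`
(of length n + m) solves `y`. -/
theorem stmt_11 (n m : ℕ) (a : Fin n → ℝ) (b : Fin m → ℝ)
    (c : Fin (n + m) → ℝ) (y : ℤ → ℝ)
    (ha : ∀ m₀ : ℤ, (∑ i : Fin n, a i * y (m₀ + (i : ℕ))) = y (m₀ + (n : ℕ)))
    (hc : ∀ k : Fin (n + m),
      c k =
        (if h : m ≤ (k : ℕ) then a ⟨(k : ℕ) - m, by have := k.isLt; omega⟩ else 0)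
        + (if h : n ≤ (k : ℕ) then b ⟨(k : ℕ) - n, by have := k.isLt; omega⟩ else 0)
        - ∑ j : Fin n, ∑ l : Fin m,
            if (j : ℕ) + (l : ℕ) = (k : ℕ) then a j * b l else 0) :
    ∀ m₀ : ℤ,
      (∑ k : Fin (n + m), c k * y (m₀ + (k : ℕ))) = y (m₀ + ((n + m : ℕ) : ℤ)) := by
  intro m₀
  classical
  set a' : ℕ → ℝ := fun i => if h : i < n then a ⟨i, h⟩ else 0 with ha'
  set b' : ℕ → ℝ := fun i => if h : i < m then b ⟨i, h⟩ else 0 with hb'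
  have key : ∀ k : Fin (n + m), c k * y (m₀ + (k : ℕ)) =
      (if m ≤ (k : ℕ) then a' ((k : ℕ) - m) * y (m₀ + (k : ℕ)) else 0)
      + (if n ≤ (k : ℕ) then b' ((k : ℕ) - n) * y (m₀ + (k : ℕ)) else 0)
      - ∑ j : Fin n, ∑ l : Fin m,
          (if (j : ℕ) + (l : ℕ) = (k : ℕ) then a j * b l * y (m₀ + (k : ℕ)) else 0) := by
    intro k
    rw [hc k, sub_mul, add_mul, Finset.sum_mul]
    congr 1
    · congr 1
      · by_cases h : m ≤ (k : ℕ)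
        · rw [dif_pos h, if_pos h, ha']
          have hlt : (k : ℕ) - m < n := by have := k.isLt; omega
          simp only [hlt, dif_pos]
        · rw [dif_neg h, if_neg h, zero_mul]
      · by_cases h : n ≤ (k : ℕ)
        · rw [dif_pos h, if_pos h, hb']
          have hlt : (k : ℕ) - n < m := by have := k.isLt; omega
          simp only [hlt, dif_pos]
        · rw [dif_neg h, if_neg h, zero_mul]
    · apply Finset.sum_congr rfl
      intro j _
      rw [Finset.sum_mul]
      apply Finset.sum_congr rfl
      intro l _
      by_cases h : (j : ℕ) + (l : ℕ) = (k : ℕ)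
      · rw [if_pos h, if_pos h]
      · rw [if_neg h, if_neg h, zero_mul]
  rw [Finset.sum_congr rfl (fun k _ => key k)]
  rw [Finset.sum_sub_distrib, Finset.sum_add_distrib]
  -- First sum
  have hS1 : (∑ k : Fin (n + m),
      if m ≤ (k : ℕ) then a' ((k : ℕ) - m) * y (m₀ + (k : ℕ)) else 0)
      = y (m₀ + (m : ℕ) + (n : ℕ)) := by
    rw [Fin.sum_univ_eq_sum_range
      (fun k => if m ≤ k then a' (k - m) * y (m₀ + (k : ℕ)) else 0) (n + m)]
    rw [shift_sum_aux n m a' (fun k => y (m₀ + (k : ℕ)))]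
    rw [← ha (m₀ + (m : ℕ))]
    rw [← Fin.sum_univ_eq_sum_range (fun i => a' i * y (m₀ + ((m + i : ℕ) : ℤ))) n]
    apply Finset.sum_congr rfl
    intro i _
    have h1 : a' (i : ℕ) = a i := by simp [ha', i.isLt]
    rw [h1]
    congr 1
    push_cast
    ring_nf
  -- Second sum
  have hS2 : (∑ k : Fin (n + m),
      if n ≤ (k : ℕ) then b' ((k : ℕ) - n) * y (m₀ + (k : ℕ)) else 0)
      = ∑ l : Fin m, b l * y (m₀ + (n : ℕ) + (l : ℕ)) := by
    rw [Fin.sum_univ_eq_sum_range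
      (fun k => if n ≤ k then b' (k - n) * y (m₀ + (k : ℕ)) else 0) (n + m)]
    have hcomm : n + m = m + n := by omega
    rw [hcomm, shift_sum_aux m n b' (fun k => y (m₀ + (k : ℕ)))]
    rw [← Fin.sum_univ_eq_sum_range (fun i => b' i * y (m₀ + ((n + i : ℕ) : ℤ))) m]
    apply Finset.sum_congr rfl
    intro l _
    have : b' (l : ℕ) = b l := by simp [hb', l.isLt]
    rw [this]
    congr 1
    push_cast
    ring_nf
  -- Third sum
  have hS3 : (∑ k : Fin (n + m), ∑ j : Fin n, ∑ l : Fin m,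
      (if (j : ℕ) + (l : ℕ) = (k : ℕ) then a j * b l * y (m₀ + (k : ℕ)) else 0))
      = ∑ l : Fin m, b l * y (m₀ + (n : ℕ) + (l : ℕ)) := by
    rw [Finset.sum_comm]
    have swp : (∑ j : Fin n, ∑ k : Fin (n + m), ∑ l : Fin m,
        (if (j : ℕ) + (l : ℕ) = (k : ℕ) then a j * b l * y (m₀ + (k : ℕ)) else 0))
        = ∑ j : Fin n, ∑ l : Fin m, ∑ k : Fin (n + m),
        (if (j : ℕ) + (l : ℕ) = (k : ℕ) then a j * b l * y (m₀ + (k : ℕ)) else 0) :=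
      Finset.sum_congr rfl (fun j _ => Finset.sum_comm)
    rw [swp]
    have step : ∀ j : Fin n, ∀ l : Fin m,
        (∑ k : Fin (n + m),
          if (j : ℕ) + (l : ℕ) = (k : ℕ) then a j * b l * y (m₀ + (k : ℕ)) else 0)
        = a j * b l * y (m₀ + ((j : ℕ) + (l : ℕ) : ℕ)) := by
      intro j l
      have hjl : (j : ℕ) + (l : ℕ) < n + m := by
        have := j.isLt; have := l.isLt; omega
      rw [Finset.sum_eq_single (⟨(j : ℕ) + (l : ℕ), hjl⟩ : Fin (n + m))]
      · rw [if_pos rfl]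
      · intro k _ hk
        rw [if_neg (fun h => hk (by exact Fin.ext h.symm))]
      · intro h; exact absurd (Finset.mem_univ _) h
    calc (∑ j : Fin n, ∑ l : Fin m, ∑ k : Fin (n + m),
          if (j : ℕ) + (l : ℕ) = (k : ℕ) then a j * b l * y (m₀ + (k : ℕ)) else 0)
        = ∑ j : Fin n, ∑ l : Fin m, a j * b l * y (m₀ + ((j : ℕ) + (l : ℕ) : ℕ)) := by
          apply Finset.sum_congr rfl; intro j _
          apply Finset.sum_congr rfl; intro l _
          exact step j l
      _ = ∑ l : Fin m, b l * ∑ j : Fin n, a j * y ((m₀ + (l : ℕ)) + (j : ℕ)) := by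
          rw [Finset.sum_comm]
          apply Finset.sum_congr rfl; intro l _
          rw [Finset.mul_sum]
          apply Finset.sum_congr rfl; intro j _
          have harg : (m₀ + ((j : ℕ) + (l : ℕ) : ℕ) : ℤ) = (m₀ + (l : ℕ)) + (j : ℕ) := by
            push_cast; ring
          rw [harg]; ring
      _ = ∑ l : Fin m, b l * y (m₀ + (n : ℕ) + (l : ℕ)) := by
          apply Finset.sum_congr rfl; intro l _
          rw [ha (m₀ + (l : ℕ))]
          congr 1
          ring
  rw [hS1, hS2, hS3]
  have : (m₀ + (m : ℕ) + (n : ℕ) : ℤ) = m₀ + ((n + m : ℕ) : ℤ) := by push_cast; ring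
  rw [this]
  ring_nf
end
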